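/- (Theorem 3(a).) Under the hypotheses of Theorem 1 (closed-loop unicycle dynamics with controller ω = v/d + v·k₁·Ω(v·ē_x) + v·k₂·((r − d)/r)·η(r − d), v ≠ 0 constant, k₁, k₂ > 0, r(0) ∈ (r_i, r_o)), the transformed error vector satisfies ē_x(t)² + ē_y(t)² ≤ 2·V₁(0) for all t ≥ 0, where V₁(0) = (1/2)(ē_x(0)² + ē_y(0)²) + d·k₂·V_r(r(0) − d). -/

import Mathlib

/-- Range r(t) = √((x(t) − x_T)² + (y(t) − y_T)²). -/
noncomputable def rng (x y : ℝ → ℝ) (xT yT : ℝ) (t : ℝ) : ℝ :=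
  Real.sqrt ((x t - xT) ^ 2 + (y t - yT) ^ 2)

/-- Transformed error ē_x(t) = (x(t) − x_T)·cos θ(t) + (y(t) − y_T)·sin θ(t). -/
noncomputable def ebx (x y θ : ℝ → ℝ) (xT yT : ℝ) (t : ℝ) : ℝ :=
  (x t - xT) * Real.cos (θ t) + (y t - yT) * Real.sin (θ t)

/-- Transformed error ē_y(t) = −(x(t) − x_T)·sin θ(t) + (y(t) − y_T)·cos θ(t) + d. -/
noncomputable def eby (x y θ : ℝ → ℝ) (xT yT d : ℝ) (t : ℝ) : ℝ :=
  -(x t - xT) * Real.sin (θ t) + (y t - yT) * Real.cos (θ t) + d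

/-- The asymmetric barrier Lyapunov function V_r. -/
noncomputable def Vr (δa δb e : ℝ) : ℝ :=
  if 0 < e then (1 / 2) * Real.log (δb ^ 2 / (δb ^ 2 - e ^ 2))
  else (1 / 2) * Real.log (δa ^ 2 / (δa ^ 2 - e ^ 2))

/-- η(e) = 1/(δ_b² − e²) for e > 0 and η(e) = 1/(δ_a² − e²) for e ≤ 0. -/
noncomputable def eta (δa δb e : ℝ) : ℝ :=
  if 0 < e then 1 / (δb ^ 2 - e ^ 2) else 1 / (δa ^ 2 - e ^ 2)

/-! ### Auxiliary lemmas about the barrier function -/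

lemma Vr_nonneg {δa δb e : ℝ} (ha : 0 < δa) (hb : 0 < δb)
    (h1 : -δa < e) (h2 : e < δb) : 0 ≤ Vr δa δb e := by
  unfold Vr
  split_ifs with h
  · have hpos : 0 < δb ^ 2 - e ^ 2 := by nlinarith
    have hge : (1:ℝ) ≤ δb ^ 2 / (δb ^ 2 - e ^ 2) := by
      rw [le_div_iff₀ hpos]; nlinarith
    have := Real.log_nonneg hge
    linarith
  · have hpos : 0 < δa ^ 2 - e ^ 2 := by nlinarith
    have hge : (1:ℝ) ≤ δa ^ 2 / (δa ^ 2 - e ^ 2) := by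
      rw [le_div_iff₀ hpos]; nlinarith
    have := Real.log_nonneg hge
    linarith

lemma Vr_zero (δa δb : ℝ) : Vr δa δb 0 = 0 := by
  unfold Vr
  rcases eq_or_ne δa 0 with h | h
  · simp [h]
  · norm_num [div_self (pow_ne_zero 2 h)]

/-- Vr as the δb-branch log difference. -/
lemma Vr_eq_b {δa δb e : ℝ} (hb : 0 < δb) (h0 : 0 ≤ e) (h2 : e < δb) :
    Vr δa δb e = (1/2) * Real.log (δb ^ 2) - (1/2) * Real.log (δb ^ 2 - e ^ 2) := by
  have hpos : 0 < δb ^ 2 - e ^ 2 := by nlinarith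
  rcases eq_or_lt_of_le h0 with h | h
  · rw [← h, Vr_zero]
    norm_num
  · rw [Vr, if_pos h, Real.log_div (by positivity) (ne_of_gt hpos)]
    ring

lemma Vr_eq_a {δa δb e : ℝ} (ha : 0 < δa) (h0 : e ≤ 0) (h1 : -δa < e) :
    Vr δa δb e = (1/2) * Real.log (δa ^ 2) - (1/2) * Real.log (δa ^ 2 - e ^ 2) := by
  have hpos : 0 < δa ^ 2 - e ^ 2 := by nlinarith
  rw [Vr, if_neg (not_lt.mpr h0), Real.log_div (by positivity) (ne_of_gt hpos)]
  ring

/-- Derivative of a branch auxiliary function. -/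
lemma hasDerivAt_branch {δ e : ℝ} (hpos : 0 < δ ^ 2 - e ^ 2) :
    HasDerivAt (fun u => (1/2) * Real.log (δ ^ 2) - (1/2) * Real.log (δ ^ 2 - u ^ 2))
      (e * (1 / (δ ^ 2 - e ^ 2))) e := by
  have h1 : HasDerivAt (fun u : ℝ => δ ^ 2 - u ^ 2) (-(2 * e)) e := by
    simpa using ((hasDerivAt_pow 2 e).const_sub (δ ^ 2))
  have h2 := (h1.log (ne_of_gt hpos)).const_mul ((1:ℝ)/2)
  have h3 := (hasDerivAt_const e ((1/2) * Real.log (δ ^ 2))).sub h2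
  refine h3.congr_deriv (Eq.symm ?_)
  field_simp
  ring

lemma hasDerivAt_Vr {δa δb e : ℝ} (ha : 0 < δa) (hb : 0 < δb)
    (h1 : -δa < e) (h2 : e < δb) :
    HasDerivAt (Vr δa δb) (e * eta δa δb e) e := by
  rcases lt_trichotomy e 0 with h | h | h
  · have hpos : 0 < δa ^ 2 - e ^ 2 := by nlinarith
    have hbr := hasDerivAt_branch (δ := δa) (e := e) hpos
    rw [eta, if_neg (not_lt.mpr h.le)]
    apply hbr.congr_of_eventuallyEq
    filter_upwards [Ioo_mem_nhds h1 h] with u hu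
    exact Vr_eq_a ha hu.2.le hu.1
  · subst h
    have hpa : 0 < δa ^ 2 - (0:ℝ) ^ 2 := by nlinarith
    have hpb : 0 < δb ^ 2 - (0:ℝ) ^ 2 := by nlinarith
    have hval : (0:ℝ) * eta δa δb 0 = 0 := by simp
    rw [hval]
    have hleft : HasDerivWithinAt (Vr δa δb) 0 (Set.Ioc (-δa) 0) 0 := by
      have hh := (hasDerivAt_branch (δ := δa) (e := (0:ℝ)) hpa).hasDerivWithinAt
        (s := Set.Ioc (-δa) 0)
      simp only [zero_mul] at hh
      apply hh.congr
      · intro u hu; exact Vr_eq_a ha hu.2 hu.1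
      · exact Vr_eq_a ha le_rfl (by linarith)
    have hright : HasDerivWithinAt (Vr δa δb) 0 (Set.Ico 0 δb) 0 := by
      have hh := (hasDerivAt_branch (δ := δb) (e := (0:ℝ)) hpb).hasDerivWithinAt
        (s := Set.Ico 0 δb)
      simp only [zero_mul] at hh
      apply hh.congr
      · intro u hu; exact Vr_eq_b hb hu.1 hu.2
      · exact Vr_eq_b hb le_rfl hb
    have hunion := hleft.union hright
    have hmem : Set.Ioc (-δa) 0 ∪ Set.Ico 0 δb ∈ nhds (0:ℝ) := by
      have hsub : Set.Ioo (-δa) δb ⊆ Set.Ioc (-δa) 0 ∪ Set.Ico 0 δb := by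
        intro u hu
        rcases le_or_gt u 0 with h | h
        · exact Or.inl ⟨hu.1, h⟩
        · exact Or.inr ⟨h.le, hu.2⟩
      exact Filter.mem_of_superset (Ioo_mem_nhds (by linarith) hb) hsub
    exact hunion.hasDerivAt hmem
  · have hpos : 0 < δb ^ 2 - e ^ 2 := by nlinarith
    have hbr := hasDerivAt_branch (δ := δb) (e := e) hpos
    rw [eta, if_pos h]
    apply hbr.congr_of_eventuallyEq
    filter_upwards [Ioo_mem_nhds h h2] with u hu
    exact Vr_eq_b hb hu.1.le hu.2

/-- Bound extraction: Vr e ≤ C traps e in [-δa·q, δb·q] where q = √(1-exp(-2C)). -/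
lemma Vr_bound {δa δb e C : ℝ} (ha : 0 < δa) (hb : 0 < δb)
    (h1 : -δa < e) (h2 : e < δb) (hC : Vr δa δb e ≤ C) :
    -(δa * Real.sqrt (1 - Real.exp (-(2*C)))) ≤ e ∧
      e ≤ δb * Real.sqrt (1 - Real.exp (-(2*C))) := by
  have hC0 : 0 ≤ C := le_trans (Vr_nonneg ha hb h1 h2) hC
  have hK : Real.exp (-(2*C)) ≤ 1 := Real.exp_le_one_iff.mpr (by linarith)
  have hq0 : 0 ≤ Real.sqrt (1 - Real.exp (-(2*C))) := Real.sqrt_nonneg _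
  have hqsq : Real.sqrt (1 - Real.exp (-(2*C))) ^ 2 = 1 - Real.exp (-(2*C)) :=
    Real.sq_sqrt (by linarith)
  set q := Real.sqrt (1 - Real.exp (-(2*C))) with hq
  have hE : 0 < Real.exp (2*C) := Real.exp_pos _
  have hKe : Real.exp (-(2*C)) = (Real.exp (2*C))⁻¹ := Real.exp_neg _
  have hEK : Real.exp (2*C) * (Real.exp (2*C))⁻¹ = 1 := mul_inv_cancel₀ hE.ne'
  rcases le_or_gt e 0 with h | h
  · have hpos : 0 < δa ^ 2 - e ^ 2 := by nlinarith
    have hVr : Vr δa δb e = (1/2) * Real.log (δa^2 / (δa^2 - e^2)) := by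
      rw [Vr, if_neg (not_lt.mpr h)]
    have hlog : Real.log (δa^2 / (δa^2 - e^2)) ≤ 2*C := by
      rw [hVr] at hC; linarith
    have hratio : δa^2 / (δa^2 - e^2) ≤ Real.exp (2*C) := by
      have := Real.exp_le_exp.mpr hlog
      rwa [Real.exp_log (by positivity)] at this
    have hineq : δa^2 ≤ Real.exp (2*C) * (δa^2 - e^2) := by
      rw [div_le_iff₀ hpos] at hratio; linarith
    have hesq' : Real.exp (2*C) * e^2 ≤ Real.exp (2*C) * ((δa*q)^2) := by
      rw [mul_pow, hqsq, hKe]; nlinarith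
    have hesq : e^2 ≤ (δa*q)^2 := le_of_mul_le_mul_left hesq' hE
    have hdq : 0 ≤ δa * q := mul_nonneg ha.le hq0
    have habs : |e| ≤ δa * q := by
      calc |e| = Real.sqrt (e^2) := (Real.sqrt_sq_eq_abs e).symm
        _ ≤ Real.sqrt ((δa*q)^2) := Real.sqrt_le_sqrt hesq
        _ = δa*q := Real.sqrt_sq hdq
    exact ⟨(abs_le.mp habs).1, le_trans h (mul_nonneg hb.le hq0)⟩
  · have hpos : 0 < δb ^ 2 - e ^ 2 := by nlinarith
    have hVr : Vr δa δb e = (1/2) * Real.log (δb^2 / (δb^2 - e^2)) := by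
      rw [Vr, if_pos h]
    have hlog : Real.log (δb^2 / (δb^2 - e^2)) ≤ 2*C := by
      rw [hVr] at hC; linarith
    have hratio : δb^2 / (δb^2 - e^2) ≤ Real.exp (2*C) := by
      have := Real.exp_le_exp.mpr hlog
      rwa [Real.exp_log (by positivity)] at this
    have hineq : δb^2 ≤ Real.exp (2*C) * (δb^2 - e^2) := by
      rw [div_le_iff₀ hpos] at hratio; linarith
    have hesq' : Real.exp (2*C) * e^2 ≤ Real.exp (2*C) * ((δb*q)^2) := by
      rw [mul_pow, hqsq, hKe]; nlinarith
    have hesq : e^2 ≤ (δb*q)^2 := le_of_mul_le_mul_left hesq' hE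
    have hdq : 0 ≤ δb * q := mul_nonneg hb.le hq0
    have habs : |e| ≤ δb * q := by
      calc |e| = Real.sqrt (e^2) := (Real.sqrt_sq_eq_abs e).symm
        _ ≤ Real.sqrt ((δb*q)^2) := Real.sqrt_le_sqrt hesq
        _ = δb*q := Real.sqrt_sq hdq
    exact ⟨le_trans (neg_nonpos_of_nonneg (mul_nonneg ha.le hq0)) h.le, (abs_le.mp habs).2⟩

/-! ### Derivative of the Lyapunov function along trajectories -/

lemma scalar_id (a b d k1 k2 r v E W : ℝ) (hd : d ≠ 0) (hr : r ≠ 0) :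
    -(d*k1) * ((v*a)*W) =
      (1/2) * ((2:ℕ) * a^(2-1) * (v + (b - d) * (v/d + v*k1*W + v*k2*((r-d)/r)*E)) +
        (2:ℕ) * b^(2-1) * (-a * (v/d + v*k1*W + v*k2*((r-d)/r)*E))) +
      d*k2*((r-d)*E*(v*a/r)) := by
  push_cast
  field_simp
  ring

lemma hasDerivAt_V {x y θ : ℝ → ℝ} {Ω : ℝ → ℝ} {v d k1 k2 ri ro xT yT : ℝ}
    (hri : 0 < ri) (hrid : ri < d) (hdro : d < ro) {t : ℝ}
    (hin : rng x y xT yT t ∈ Set.Ioo ri ro)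
    (hx : HasDerivAt x (v * Real.cos (θ t)) t)
    (hy : HasDerivAt y (v * Real.sin (θ t)) t)
    (hθ : HasDerivAt θ (v / d + v * k1 * Ω (v * ebx x y θ xT yT t) +
        v * k2 * ((rng x y xT yT t - d) / rng x y xT yT t) *
          eta (d - ri) (ro - d) (rng x y xT yT t - d)) t) :
    HasDerivAt (fun s => (1/2) * ((ebx x y θ xT yT s)^2 + (eby x y θ xT yT d s)^2) +
        d * k2 * Vr (d - ri) (ro - d) (rng x y xT yT s - d))
      (-(d*k1) * ((v * ebx x y θ xT yT t) * Ω (v * ebx x y θ xT yT t))) t := by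
  have hd : (0:ℝ) < d := lt_trans hri hrid
  have hrpos : 0 < rng x y xT yT t := lt_trans hri hin.1
  have hrne : rng x y xT yT t ≠ 0 := ne_of_gt hrpos
  have hfnn : 0 ≤ (x t - xT)^2 + (y t - yT)^2 := by positivity
  have hrsq : rng x y xT yT t ^ 2 = (x t - xT)^2 + (y t - yT)^2 := Real.sq_sqrt hfnn
  have hfne : (x t - xT)^2 + (y t - yT)^2 ≠ 0 := by rw [← hrsq]; positivity
  have hpy : Real.sin (θ t) ^ 2 + Real.cos (θ t) ^ 2 = 1 := Real.sin_sq_add_cos_sq (θ t)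
  set ω := v / d + v * k1 * Ω (v * ebx x y θ xT yT t) +
      v * k2 * ((rng x y xT yT t - d) / rng x y xT yT t) *
        eta (d - ri) (ro - d) (rng x y xT yT t - d) with hω
  -- derivative of ebx
  have hex : HasDerivAt (fun s => ebx x y θ xT yT s)
      (v + (eby x y θ xT yT d t - d) * ω) t := by
    have hraw := ((hx.sub_const xT).mul hθ.cos).add ((hy.sub_const yT).mul hθ.sin)
    refine hraw.congr_deriv (Eq.symm ?_)
    simp only [eby]
    linear_combination (-v) * hpy
  -- derivative of eby
  have hey : HasDerivAt (fun s => eby x y θ xT yT d s)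
      (-(ebx x y θ xT yT t) * ω) t := by
    have hraw := ((((hx.sub_const xT).neg.mul hθ.sin).add
      ((hy.sub_const yT).mul hθ.cos)).add_const d)
    refine hraw.congr_deriv (Eq.symm ?_)
    simp only [ebx, Pi.neg_apply]
    ring
  -- derivative of rng
  have hrd : HasDerivAt (fun s => rng x y xT yT s)
      (v * ebx x y θ xT yT t / rng x y xT yT t) t := by
    have hf : HasDerivAt (fun s => (x s - xT)^2 + (y s - yT)^2)
        ((2:ℕ) * (x t - xT)^(2-1) * (v * Real.cos (θ t)) +
         (2:ℕ) * (y t - yT)^(2-1) * (v * Real.sin (θ t))) t :=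
      ((hx.sub_const xT).pow 2).add ((hy.sub_const yT).pow 2)
    have hsq := hf.sqrt hfne
    refine hsq.congr_deriv (Eq.symm ?_)
    simp only [ebx]
    rw [show Real.sqrt ((x t - xT)^2 + (y t - yT)^2) = rng x y xT yT t from rfl]
    push_cast
    field_simp
  -- derivative of Vr composed
  have hVrt : HasDerivAt (fun s => Vr (d - ri) (ro - d) (rng x y xT yT s - d))
      (((rng x y xT yT t - d) * eta (d - ri) (ro - d) (rng x y xT yT t - d)) *
        (v * ebx x y θ xT yT t / rng x y xT yT t)) t := by
    have hVe := hasDerivAt_Vr (δa := d - ri) (δb := ro - d) (e := rng x y xT yT t - d)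
      (by linarith) (by linarith) (by have := hin.1; simp only [Set.mem_Ioo] at hin; linarith)
      (by have := hin.2; simp only [Set.mem_Ioo] at hin; linarith)
    have hcomp := hVe.comp t (hrd.sub_const d)
    exact hcomp
  -- assemble
  have hall := ((((hex.pow 2).add (hey.pow 2)).const_mul ((1:ℝ)/2)).add
    (hVrt.const_mul (d*k2)))
  refine hall.congr_deriv (Eq.symm ?_)
  rw [hω]
  exact scalar_id _ _ _ _ _ _ _ _ _ (ne_of_gt hd) hrne

/-! ### Abstract barrier/Lyapunov invariance on [0,∞) -/

lemma lyap_bound {r V : ℝ → ℝ} {ri ro lo hi : ℝ}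
    (hlo : ri < lo) (hhi : hi < ro)
    (hrc : ∀ t ≥ (0:ℝ), ContinuousAt r t)
    (hVd : ∀ t ≥ (0:ℝ), r t ∈ Set.Ioo ri ro → ∃ m ≤ (0:ℝ), HasDerivAt V m t)
    (hr0 : r 0 ∈ Set.Ioo ri ro)
    (hbound : ∀ s, 0 ≤ s → r s ∈ Set.Ioo ri ro → V s ≤ V 0 → r s ∈ Set.Icc lo hi) :
    ∀ t ≥ (0:ℝ), r t ∈ Set.Ioo ri ro ∧ V t ≤ V 0 := by
  have hIccIoo : Set.Icc lo hi ⊆ Set.Ioo ri ro := fun u hu =>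
    ⟨lt_of_lt_of_le hlo hu.1, lt_of_le_of_lt hu.2 hhi⟩
  have hmono : ∀ T, 0 ≤ T → (∀ s ∈ Set.Icc (0:ℝ) T, r s ∈ Set.Ioo ri ro) → V T ≤ V 0 := by
    intro T hT hIoo
    rcases eq_or_lt_of_le hT with h | h
    · rw [← h]
    · have hD : ∀ s ∈ Set.Icc (0:ℝ) T, ∃ m ≤ (0:ℝ), HasDerivAt V m s :=
        fun s hs => hVd s hs.1 (hIoo s hs)
      have hcont : ContinuousOn V (Set.Icc 0 T) := fun s hs => by
        obtain ⟨m, _, hder⟩ := hD s hs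
        exact hder.continuousAt.continuousWithinAt
      have hdiff : DifferentiableOn ℝ V (interior (Set.Icc (0:ℝ) T)) := by
        rw [interior_Icc]
        intro s hs
        obtain ⟨m, _, hder⟩ := hD s ⟨hs.1.le, hs.2.le⟩
        exact hder.differentiableAt.differentiableWithinAt
      have hderiv : ∀ s ∈ interior (Set.Icc (0:ℝ) T), deriv V s ≤ 0 := by
        rw [interior_Icc]
        intro s hs
        obtain ⟨m, hm, hder⟩ := hD s ⟨hs.1.le, hs.2.le⟩
        rw [hder.deriv]; exact hm
      exact antitoneOn_of_deriv_nonpos (convex_Icc 0 T) hcont hdiff hderiv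
        (Set.left_mem_Icc.mpr hT) (Set.right_mem_Icc.mpr hT) hT
  have hinv : ∀ t, 0 ≤ t → r t ∈ Set.Icc lo hi := by
    by_contra hcon
    push_neg at hcon
    obtain ⟨t0, ht0, hnot⟩ := hcon
    set B := {t : ℝ | 0 ≤ t ∧ r t ∉ Set.Icc lo hi} with hB
    have hBne : B.Nonempty := ⟨t0, ht0, hnot⟩
    have hBbd : BddBelow B := ⟨0, fun b hb => hb.1⟩
    set τ := sInf B with hτ
    have hτ0 : 0 ≤ τ := le_csInf hBne fun b hb => hb.1
    have hpre : ∀ s, 0 ≤ s → s < τ → r s ∈ Set.Icc lo hi := by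
      intro s hs hsτ
      by_contra hno
      exact absurd (csInf_le hBbd ⟨hs, hno⟩) (not_le.mpr hsτ)
    have hrτ : r τ ∈ Set.Icc lo hi := by
      rcases eq_or_lt_of_le hτ0 with h | h
      · rw [← h]; exact hbound 0 le_rfl hr0 le_rfl
      · have htend : Filter.Tendsto r (nhdsWithin τ (Set.Iio τ)) (nhds (r τ)) :=
          ((hrc τ hτ0).continuousWithinAt).tendsto
        refine isClosed_Icc.mem_of_tendsto htend ?_
        filter_upwards [Ioo_mem_nhdsLT_of_mem (Set.mem_Ioc.mpr ⟨h, le_rfl⟩)] with u hu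
        exact hpre u hu.1.le hu.2
    have hrτIoo : r τ ∈ Set.Ioo ri ro := hIccIoo hrτ
    have hev : r ⁻¹' Set.Ioo ri ro ∈ nhds τ := hrc τ hτ0 (isOpen_Ioo.mem_nhds hrτIoo)
    obtain ⟨ε, hε, hball⟩ := Metric.mem_nhds_iff.mp hev
    have hIooAll : ∀ s ∈ Set.Icc (0:ℝ) (τ + ε/2), r s ∈ Set.Ioo ri ro := by
      intro s hs
      rcases lt_or_ge s τ with h' | h'
      · exact hIccIoo (hpre s hs.1 h')
      · apply hball
        rw [Metric.mem_ball, Real.dist_eq, abs_of_nonneg (by linarith)]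
        linarith [hs.2]
    obtain ⟨b, hbB, hbτ⟩ := exists_lt_of_csInf_lt hBne
      (show sInf B < τ + ε/2 by rw [← hτ]; linarith)
    have hb0 : 0 ≤ b := hbB.1
    have hVb : V b ≤ V 0 :=
      hmono b hb0 fun s hs => hIooAll s ⟨hs.1, le_trans hs.2 hbτ.le⟩
    exact hbB.2 (hbound b hb0 (hIooAll b ⟨hb0, hbτ.le⟩) hVb)
  intro t ht
  have h1 : r t ∈ Set.Ioo ri ro := hIccIoo (hinv t ht)
  exact ⟨h1, hmono t ht fun s hs => hIccIoo (hinv s hs.1)⟩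

set_option maxHeartbeats 2000000 in
/-- Theorem 3(a): Under the hypotheses of Theorem 1, the transformed
error vector satisfies ē_x(t)² + ē_y(t)² ≤ 2·V₁(0) for all t ≥ 0, where
V₁(0) = (1/2)(ē_x(0)² + ē_y(0)²) + d·k₂·V_r(r(0) − d). -/
theorem theorem3a_error_bound
    (x y θ : ℝ → ℝ) (Ω : ℝ → ℝ) (v d k1 k2 ri ro xT yT : ℝ)
    (hΩcont : Continuous Ω) (hΩ0 : Ω 0 = 0) (hΩpos : ∀ s : ℝ, s ≠ 0 → 0 < s * Ω s)
    (hv : v ≠ 0) (hri : 0 < ri) (hrid : ri < d) (hdro : d < ro)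
    (hk1 : 0 < k1) (hk2 : 0 < k2)
    (hxdiff : ∀ t ≥ (0 : ℝ), DifferentiableAt ℝ x t)
    (hydiff : ∀ t ≥ (0 : ℝ), DifferentiableAt ℝ y t)
    (hθdiff : ∀ t ≥ (0 : ℝ), DifferentiableAt ℝ θ t)
    (hclosedloop : ∀ t ≥ (0 : ℝ), rng x y xT yT t ∈ Set.Ioo ri ro →
      HasDerivAt x (v * Real.cos (θ t)) t ∧
      HasDerivAt y (v * Real.sin (θ t)) t ∧
      HasDerivAt θ (v / d + v * k1 * Ω (v * ebx x y θ xT yT t) +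
        v * k2 * ((rng x y xT yT t - d) / rng x y xT yT t) *
          eta (d - ri) (ro - d) (rng x y xT yT t - d)) t)
    (hr0 : rng x y xT yT 0 ∈ Set.Ioo ri ro)
    (V10 : ℝ)
    (hV10 : V10 = (1 / 2) * ((ebx x y θ xT yT 0) ^ 2 + (eby x y θ xT yT d 0) ^ 2) +
      d * k2 * Vr (d - ri) (ro - d) (rng x y xT yT 0 - d)) :
    ∀ t ≥ (0 : ℝ), (ebx x y θ xT yT t) ^ 2 + (eby x y θ xT yT d t) ^ 2 ≤ 2 * V10 := by
  have hd : (0:ℝ) < d := lt_trans hri hrid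
  have hδa : (0:ℝ) < d - ri := by linarith
  have hδb : (0:ℝ) < ro - d := by linarith
  -- the Lyapunov function
  set V : ℝ → ℝ := fun s => (1/2) * ((ebx x y θ xT yT s)^2 + (eby x y θ xT yT d s)^2) +
      d * k2 * Vr (d - ri) (ro - d) (rng x y xT yT s - d) with hVdef
  -- continuity of the range
  have hrc : ∀ t ≥ (0:ℝ), ContinuousAt (rng x y xT yT) t := by
    intro t ht
    have hin : ContinuousAt (fun s => (x s - xT)^2 + (y s - yT)^2) t :=
      ((((hxdiff t ht).continuousAt.sub continuousAt_const).pow 2).add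
        (((hydiff t ht).continuousAt.sub continuousAt_const).pow 2))
    exact Real.continuous_sqrt.continuousAt.comp hin
  -- derivative of V is nonpositive
  have hVd : ∀ t ≥ (0:ℝ), rng x y xT yT t ∈ Set.Ioo ri ro →
      ∃ m ≤ (0:ℝ), HasDerivAt V m t := by
    intro t ht hin
    obtain ⟨hx, hy, hθ'⟩ := hclosedloop t ht hin
    refine ⟨-(d*k1) * ((v * ebx x y θ xT yT t) * Ω (v * ebx x y θ xT yT t)), ?_,
      hasDerivAt_V hri hrid hdro hin hx hy hθ'⟩
    rcases eq_or_ne (v * ebx x y θ xT yT t) 0 with h | h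
    · rw [h]; simp
    · have h1 := hΩpos _ h
      nlinarith [mul_pos hd hk1]
  -- nonnegativity of V 0 and the constants
  have he0a : -(d - ri) < rng x y xT yT 0 - d := by have := hr0.1; simp only [Set.mem_Ioo] at hr0; linarith
  have he0b : rng x y xT yT 0 - d < ro - d := by have := hr0.2; simp only [Set.mem_Ioo] at hr0; linarith
  have hVr0 : 0 ≤ Vr (d - ri) (ro - d) (rng x y xT yT 0 - d) := Vr_nonneg hδa hδb he0a he0b
  have hV0 : 0 ≤ V 0 := by
    rw [hVdef]
    have h1 : 0 ≤ (1/2) * ((ebx x y θ xT yT 0)^2 + (eby x y θ xT yT d 0)^2) := by positivity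
    have h2 : 0 ≤ d * k2 * Vr (d - ri) (ro - d) (rng x y xT yT 0 - d) :=
      mul_nonneg (mul_nonneg hd.le hk2.le) hVr0
    exact add_nonneg h1 h2
  set C := V 0 / (d * k2) with hCdef
  have hC0 : 0 ≤ C := div_nonneg hV0 (mul_pos hd hk2).le
  set q := Real.sqrt (1 - Real.exp (-(2*C))) with hqdef
  have hq0 : 0 ≤ q := Real.sqrt_nonneg _
  have hKle : Real.exp (-(2*C)) ≤ 1 := Real.exp_le_one_iff.mpr (by linarith)
  have hq1 : q < 1 := by
    have hKpos : 0 < Real.exp (-(2*C)) := Real.exp_pos _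
    have h1 : (1:ℝ) - Real.exp (-(2*C)) < 1 := by linarith
    calc q < Real.sqrt 1 := Real.sqrt_lt_sqrt (by linarith) h1
      _ = 1 := Real.sqrt_one
  have hlo : ri < d - (d - ri) * q := by nlinarith
  have hhi : d + (ro - d) * q < ro := by nlinarith
  -- the a priori bound
  have hbound : ∀ s, 0 ≤ s → rng x y xT yT s ∈ Set.Ioo ri ro → V s ≤ V 0 →
      rng x y xT yT s ∈ Set.Icc (d - (d - ri) * q) (d + (ro - d) * q) := by
    intro s hs hin hVs
    have hea : -(d - ri) < rng x y xT yT s - d := by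
      have := hin.1; simp only [Set.mem_Ioo] at hin; linarith
    have heb : rng x y xT yT s - d < ro - d := by
      have := hin.2; simp only [Set.mem_Ioo] at hin; linarith
    have hVs' : (1/2) * ((ebx x y θ xT yT s)^2 + (eby x y θ xT yT d s)^2) +
        d * k2 * Vr (d - ri) (ro - d) (rng x y xT yT s - d) ≤
        (1/2) * ((ebx x y θ xT yT 0)^2 + (eby x y θ xT yT d 0)^2) +
        d * k2 * Vr (d - ri) (ro - d) (rng x y xT yT 0 - d) := hVs
    have hV0beta : V 0 = (1/2) * ((ebx x y θ xT yT 0)^2 + (eby x y θ xT yT d 0)^2) +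
        d * k2 * Vr (d - ri) (ro - d) (rng x y xT yT 0 - d) := rfl
    have hVrle : Vr (d - ri) (ro - d) (rng x y xT yT s - d) ≤ C := by
      have h1 : 0 ≤ (1/2) * ((ebx x y θ xT yT s)^2 + (eby x y θ xT yT d s)^2) := by positivity
      rw [hCdef, le_div_iff₀ (mul_pos hd hk2), hV0beta]
      nlinarith [hVs', h1]
    obtain ⟨hL, hR⟩ := Vr_bound hδa hδb hea heb hVrle
    rw [← hqdef] at hL hR
    exact ⟨by linarith, by linarith⟩
  -- apply the abstract invariance lemma
  intro t ht
  obtain ⟨hIoo, hVle⟩ := lyap_bound hlo hhi hrc hVd hr0 hbound t ht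
  have hVrt : 0 ≤ Vr (d - ri) (ro - d) (rng x y xT yT t - d) := by
    apply Vr_nonneg hδa hδb
    · have := hIoo.1; simp only [Set.mem_Ioo] at hIoo; linarith
    · have := hIoo.2; simp only [Set.mem_Ioo] at hIoo; linarith
  have hVle' : (1/2) * ((ebx x y θ xT yT t)^2 + (eby x y θ xT yT d t)^2) +
      d * k2 * Vr (d - ri) (ro - d) (rng x y xT yT t - d) ≤
      (1/2) * ((ebx x y θ xT yT 0)^2 + (eby x y θ xT yT d 0)^2) +
      d * k2 * Vr (d - ri) (ro - d) (rng x y xT yT 0 - d) := hVle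
  have h2 : 0 ≤ d * k2 * Vr (d - ri) (ro - d) (rng x y xT yT t - d) :=
    mul_nonneg (mul_nonneg hd.le hk2.le) hVrt
  rw [hV10]
  linarith [hVle', h2]
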